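/- For every n ≥ 1 and every x ≥ √n, one has (2Φ(-x/√n))ⁿ ≤ (2^{3n/2}/π^{n/2}) · exp(-x²/2), where Φ is the standard normal cumulative distribution function Φ(s) = ∫_{-∞}^{s} (1/√(2π)) e^{-u²/2} du. -/

import Mathlib

open Real

/-- The standard normal cumulative distribution function. -/
noncomputable def stdNormalCDF (s : ℝ) : ℝ :=
  ∫ u in Set.Iic s, (1 / Real.sqrt (2 * Real.pi)) * Real.exp (-u ^ 2 / 2)

lemma integral_exp_neg_mul_Ioi {y : ℝ} (hy : 0 < y) (c : ℝ) :
    ∫ u in Set.Ioi c, Real.exp (-y * u) = Real.exp (-y * c) / y := by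
  have hderiv : ∀ u ∈ Set.Ici c,
      HasDerivAt (fun u : ℝ => -Real.exp (-y * u) / y) (Real.exp (-y * u)) u := by
    intro u _
    have h0 : HasDerivAt (fun u : ℝ => -y * u) (-y) u := by
      simpa using (hasDerivAt_id u).const_mul (-y)
    have : HasDerivAt (fun u : ℝ => Real.exp (-y * u)) (Real.exp (-y * u) * (-y)) u :=
      (Real.hasDerivAt_exp _).comp u h0
    have h2 := (this.neg).div_const y
    convert h2 using 1
    · rfl
    · rfl
    · rfl
    · rw [eq_div_iff hy.ne']; ring
  have htend : Filter.Tendsto (fun u : ℝ => -Real.exp (-y * u) / y) Filter.atTop (nhds 0) := by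
    have h1 : Filter.Tendsto (fun u : ℝ => y * u) Filter.atTop Filter.atTop :=
      Filter.Tendsto.const_mul_atTop hy Filter.tendsto_id
    have := ((Real.tendsto_exp_neg_atTop_nhds_zero.comp h1).neg).div_const y
    simpa [Function.comp, neg_mul] using this
  have hint : MeasureTheory.IntegrableOn (fun u : ℝ => Real.exp (-y * u)) (Set.Ioi c) :=
    exp_neg_integrableOn_Ioi _ hy
  rw [MeasureTheory.integral_Ioi_of_hasDerivAt_of_tendsto' hderiv hint htend]
  field_simp
  ring

lemma cdf_bound {y : ℝ} (hy : 1 ≤ y) :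
    stdNormalCDF (-y) ≤ Real.exp (-y ^ 2 / 2) / Real.sqrt (2 * Real.pi) := by
  have hy0 : 0 < y := by linarith
  have hsq : (0 : ℝ) < Real.sqrt (2 * Real.pi) := Real.sqrt_pos.2 (by positivity)
  have hflip : ∫ u in Set.Iic (-y), Real.exp (-u ^ 2 / 2)
      = ∫ u in Set.Ioi y, Real.exp (-u ^ 2 / 2) := by
    rw [← neg_neg y, ← integral_comp_neg_Iic, neg_neg]
    congr 1 with u
    ring_nf
  have hmono : ∫ u in Set.Ioi y, Real.exp (-u ^ 2 / 2)
      ≤ ∫ u in Set.Ioi y, Real.exp (y ^ 2 / 2) * Real.exp (-y * u) := by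
    apply MeasureTheory.setIntegral_mono_on
    · have : MeasureTheory.Integrable (fun u : ℝ => Real.exp (-(1/2) * u ^ 2)) :=
        integrable_exp_neg_mul_sq (by norm_num)
      exact (this.integrableOn).congr_fun (fun u _ => by ring_nf) measurableSet_Ioi
    · exact (exp_neg_integrableOn_Ioi y hy0).const_mul _
    · exact measurableSet_Ioi
    · intro u _
      rw [← Real.exp_add]
      apply Real.exp_le_exp.2
      nlinarith [sq_nonneg (u - y)]
  have hval : ∫ u in Set.Ioi y, Real.exp (y ^ 2 / 2) * Real.exp (-y * u)
      = Real.exp (-y ^ 2 / 2) / y := by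
    rw [MeasureTheory.integral_const_mul, integral_exp_neg_mul_Ioi hy0, ← mul_div_assoc,
      ← Real.exp_add]
    have h : y ^ 2 / 2 + -y * y = -y ^ 2 / 2 := by ring
    rw [h]
  have hle : ∫ u in Set.Iic (-y), Real.exp (-u ^ 2 / 2) ≤ Real.exp (-y ^ 2 / 2) := by
    rw [hflip]
    calc _ ≤ Real.exp (-y ^ 2 / 2) / y := hmono.trans hval.le
    _ ≤ Real.exp (-y ^ 2 / 2) := div_le_self (Real.exp_nonneg _) hy
  calc stdNormalCDF (-y)
      = (1 / Real.sqrt (2 * Real.pi)) * ∫ u in Set.Iic (-y), Real.exp (-u ^ 2 / 2) :=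
        MeasureTheory.integral_const_mul _ _
    _ ≤ (1 / Real.sqrt (2 * Real.pi)) * Real.exp (-y ^ 2 / 2) :=
        mul_le_mul_of_nonneg_left hle (by positivity)
    _ = Real.exp (-y ^ 2 / 2) / Real.sqrt (2 * Real.pi) := by rw [one_div, inv_mul_eq_div]

lemma cdf_nonneg (s : ℝ) : 0 ≤ stdNormalCDF s := by
  unfold stdNormalCDF
  apply MeasureTheory.setIntegral_nonneg measurableSet_Iic
  intro u _
  positivity

/-- Reflection-principle bound: for `n ≥ 1` and `x ≥ √n`,
`(2Φ(-x/√n))ⁿ ≤ (2^{3n/2}/π^{n/2}) e^{-x²/2}`. -/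
theorem reflection_principle_exit_bound (n : ℕ) (hn : 1 ≤ n) (x : ℝ)
    (hx : Real.sqrt n ≤ x) :
    (2 * stdNormalCDF (-x / Real.sqrt n)) ^ n ≤
      (2 : ℝ) ^ ((3 * (n : ℝ)) / 2) / Real.pi ^ ((n : ℝ) / 2) * Real.exp (-x ^ 2 / 2) := by
  have hn0 : (0 : ℝ) < Real.sqrt n := Real.sqrt_pos.2 (by exact_mod_cast hn)
  set y := x / Real.sqrt n with hy_def
  have hy1 : 1 ≤ y := by
    rw [hy_def, le_div_iff₀ hn0, one_mul]; exact hx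
  have hnne : (n:ℝ) ≠ 0 := by positivity
  have hys : (n:ℝ) * y ^ 2 = x ^ 2 := by
    rw [hy_def, div_pow, Real.sq_sqrt (Nat.cast_nonneg n)]
    field_simp
  have hneg : -x / Real.sqrt n = -y := by rw [hy_def]; ring
  rw [hneg]
  have hbound : 2 * stdNormalCDF (-y) ≤ Real.sqrt (2 / Real.pi) * Real.exp (-y ^ 2 / 2) := by
    have := cdf_bound hy1
    have h2 : Real.sqrt (2 / Real.pi) = 2 / Real.sqrt (2 * Real.pi) := by
      rw [eq_div_iff (by positivity), ← Real.sqrt_mul (by positivity)]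
      rw [show (2:ℝ) / Real.pi * (2 * Real.pi) = 2 ^ 2 by field_simp]
      rw [Real.sqrt_sq (by norm_num)]
    rw [h2]
    rw [div_mul_eq_mul_div, le_div_iff₀ (by positivity)]
    calc 2 * stdNormalCDF (-y) * Real.sqrt (2 * Real.pi)
        ≤ 2 * (Real.exp (-y ^ 2 / 2) / Real.sqrt (2 * Real.pi)) * Real.sqrt (2 * Real.pi) := by
          apply mul_le_mul_of_nonneg_right _ (by positivity)
          linarith
      _ = 2 * Real.exp (-y ^ 2 / 2) := by field_simp
  have hpow : (2 * stdNormalCDF (-y)) ^ n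
      ≤ (Real.sqrt (2 / Real.pi) * Real.exp (-y ^ 2 / 2)) ^ n := by
    exact pow_le_pow_left₀ (mul_nonneg (by norm_num) (cdf_nonneg _)) hbound n
  refine hpow.trans ?_
  rw [mul_pow, ← Real.exp_nat_mul]
  have hexp : Real.exp ((n : ℝ) * (-y ^ 2 / 2)) = Real.exp (-x ^ 2 / 2) := by
    congr 1
    have : (n : ℝ) * y ^ 2 = x ^ 2 := hys
    linarith
  rw [hexp]
  apply mul_le_mul_of_nonneg_right _ (Real.exp_nonneg _)
  have hpi : (0:ℝ) < Real.pi := Real.pi_pos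
  have h1 : Real.sqrt (2 / Real.pi) ^ n = (2 / Real.pi) ^ ((n : ℝ) / 2) := by
    rw [Real.sqrt_eq_rpow, ← Real.rpow_natCast ((2 / Real.pi) ^ ((1:ℝ)/2)) n,
      ← Real.rpow_mul (by positivity)]
    congr 1
    ring
  rw [h1, Real.div_rpow (by norm_num) hpi.le]
  gcongr
  · norm_num
  · nlinarith [Nat.cast_nonneg (α := ℝ) n]
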